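/- Globalization principle: Let X be a Hausdorff, locally arc-connected, connected, and simply-connected topological space, and let P be a pre-sheaf over X satisfying the localization property, the uniqueness property, and the extension property. Then for every nonempty open connected subset V of X, the restriction map P_{X,V} : P(X) → P(V) is surjective. In particular, if P is nontrivial (P(U) ≠ ∅ for some nonempty open U), then P(X) ≠ ∅. -/

import Mathlib

/-!
STATEMENT 19 (globalization principle for pre-sheaves).

A pre-sheaf `P` on a topological space `X` assigns to each open set `U` a set `P U` and to
each inclusion `V ⊆ U` a restriction map, functorially.  (For convenience the data is
defined on all subsets; only its values on open sets are ever used in the hypotheses and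
the conclusion, so this is equivalent to the usual notion.)

* localization property: for every family `𝒰` of open sets with union `U`, a member of
  `P U` is determined by its restrictions to the members of `𝒰`, and every compatible
  family of elements glues.
* uniqueness property: for `U` open connected and `V ⊆ U` open nonempty, restriction
  `P U → P V` is injective.
* extension property of an open set `U`: for `V ⊆ U` open connected nonempty, restriction
  `P U → P V` is surjective; `P` has the extension property if `X` is covered by such sets.

Theorem: if `X` is Hausdorff, locally arc-connected, connected and simply-connected and `P`
has the three properties, then for every nonempty open connected `V ⊆ X` the restriction
`P X → P V` is surjective; in particular if `P` is nontrivial then `P X` is nonempty.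
-/

/-- A pre-sheaf of sets on a topological space. -/
structure Presheaf' (X : Type*) [TopologicalSpace X] where
  obj : Set X → Type
  res : ∀ {U V : Set X}, V ⊆ U → obj U → obj V
  res_id : ∀ (U : Set X) (f : obj U), res (subset_refl U) f = f
  res_comp : ∀ {U V W : Set X} (hVU : V ⊆ U) (hWV : W ⊆ V) (f : obj U),
    res hWV (res hVU f) = res (hWV.trans hVU) f

namespace Presheaf'

variable {X : Type*} [TopologicalSpace X] (P : Presheaf' X)

/-- The localization property of a pre-sheaf. -/
def Localization : Prop :=
  ∀ 𝒰 : Set (Set X), (∀ U ∈ 𝒰, IsOpen U) →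
    (∀ f g : P.obj (⋃₀ 𝒰),
      (∀ U (hU : U ∈ 𝒰), P.res (Set.subset_sUnion_of_mem hU) f
        = P.res (Set.subset_sUnion_of_mem hU) g) → f = g) ∧
    (∀ sel : ∀ U ∈ 𝒰, P.obj U,
      (∀ U (hU : U ∈ 𝒰) (V : Set X) (hV : V ∈ 𝒰),
        P.res (Set.inter_subset_left : U ∩ V ⊆ U) (sel U hU)
          = P.res (Set.inter_subset_right : U ∩ V ⊆ V) (sel V hV)) →
      ∃ f : P.obj (⋃₀ 𝒰), ∀ U (hU : U ∈ 𝒰),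
        P.res (Set.subset_sUnion_of_mem hU) f = sel U hU)

/-- The uniqueness property of a pre-sheaf. -/
def Uniqueness : Prop :=
  ∀ U V : Set X, IsOpen U → IsPreconnected U → IsOpen V → V.Nonempty →
    ∀ h : V ⊆ U, Function.Injective (P.res h : P.obj U → P.obj V)

/-- An open set `U` has the extension property for `P`. -/
def HasExtension (U : Set X) : Prop :=
  ∀ V : Set X, IsOpen V → IsPreconnected V → V.Nonempty →
    ∀ h : V ⊆ U, Function.Surjective (P.res h : P.obj U → P.obj V)

/-- The extension property of a pre-sheaf: `X` is covered by open sets having the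
extension property. -/
def Extension : Prop :=
  ∀ x : X, ∃ U : Set X, IsOpen U ∧ x ∈ U ∧ P.HasExtension U

end Presheaf'

section Aux
set_option linter.unusedSectionVars false

open Set

namespace Presheaf'

variable {X : Type*} [TopologicalSpace X] {P : Presheaf' X}

/-- An element of the presheaf over some open set. -/
structure Elt (P : Presheaf' X) where
  U : Set X
  hU : IsOpen U
  f : P.obj U

/-- Two elements have the same germ at `x`. -/
def Agree (x : X) (a b : P.Elt) : Prop :=
  ∃ W : Set X, IsOpen W ∧ x ∈ W ∧ ∃ (h₁ : W ⊆ a.U) (h₂ : W ⊆ b.U),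
    P.res h₁ a.f = P.res h₂ b.f

theorem Agree.refl {x : X} {a : P.Elt} (hx : x ∈ a.U) : Agree x a a :=
  ⟨a.U, a.hU, hx, subset_rfl, subset_rfl, rfl⟩

theorem Agree.symm {x : X} {a b : P.Elt} (h : Agree x a b) : Agree x b a := by
  obtain ⟨W, hW, hxW, h₁, h₂, he⟩ := h
  exact ⟨W, hW, hxW, h₂, h₁, he.symm⟩

theorem Agree.trans {x : X} {a b c : P.Elt} (hab : Agree x a b) (hbc : Agree x b c) :
    Agree x a c := by
  obtain ⟨W, hW, hxW, h₁, h₂, he⟩ := hab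
  obtain ⟨W', hW', hxW', h₁', h₂', he'⟩ := hbc
  refine ⟨W ∩ W', hW.inter hW', ⟨hxW, hxW'⟩,
    inter_subset_left.trans h₁, inter_subset_right.trans h₂', ?_⟩
  have e1 : P.res (inter_subset_left.trans h₁ : W ∩ W' ⊆ a.U) a.f
      = P.res (inter_subset_left : W ∩ W' ⊆ W) (P.res h₁ a.f) := by
    rw [P.res_comp]
  have e2 : P.res (inter_subset_left : W ∩ W' ⊆ W) (P.res h₂ b.f)
      = P.res (inter_subset_right.trans h₁' : W ∩ W' ⊆ b.U) b.f := by
    rw [P.res_comp]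
  have e3 : P.res (inter_subset_right.trans h₁' : W ∩ W' ⊆ b.U) b.f
      = P.res (inter_subset_right : W ∩ W' ⊆ W') (P.res h₁' b.f) := by
    rw [P.res_comp]
  have e4 : P.res (inter_subset_right : W ∩ W' ⊆ W') (P.res h₂' c.f)
      = P.res (inter_subset_right.trans h₂' : W ∩ W' ⊆ c.U) c.f := by
    rw [P.res_comp]
  rw [e1, he, e2, e3, he', e4]

variable [LocallyPathConnectedSpace X]

/-- Germ agreement propagates along the path component of the intersection of domains. -/
theorem Agree.upgrade (huniq : P.Uniqueness) {x y : X} {a b : P.Elt}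
    (h : Agree x a b) (hy : y ∈ pathComponentIn (a.U ∩ b.U) x) : Agree y a b := by
  obtain ⟨W, hW, hxW, h₁, h₂, he⟩ := h
  have hxab : x ∈ a.U ∩ b.U := ⟨h₁ hxW, h₂ hxW⟩
  set C := pathComponentIn (a.U ∩ b.U) x with hC
  have hCopen : IsOpen C := (a.hU.inter b.hU).pathComponentIn x
  have hCsub : C ⊆ a.U ∩ b.U := pathComponentIn_subset
  have hCconn : IsPreconnected C :=
    ((isPathConnected_pathComponentIn hxab).isConnected).isPreconnected
  have hWC : W ∩ C ⊆ C := inter_subset_right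
  have hne : (W ∩ C).Nonempty := ⟨x, hxW, mem_pathComponentIn_self hxab⟩
  have hinj := huniq C (W ∩ C) hCopen hCconn (hW.inter hCopen) hne hWC
  have key : P.res (hCsub.trans inter_subset_left : C ⊆ a.U) a.f
      = P.res (hCsub.trans inter_subset_right : C ⊆ b.U) b.f := by
    apply hinj
    have e1 : P.res hWC (P.res (hCsub.trans inter_subset_left : C ⊆ a.U) a.f)
        = P.res (inter_subset_left : W ∩ C ⊆ W) (P.res h₁ a.f) := by
      rw [P.res_comp, P.res_comp]
    have e2 : P.res (inter_subset_left : W ∩ C ⊆ W) (P.res h₂ b.f)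
        = P.res hWC (P.res (hCsub.trans inter_subset_right : C ⊆ b.U) b.f) := by
      rw [P.res_comp, P.res_comp]
    rw [e1, he, e2]
  exact ⟨C, hCopen, hy, hCsub.trans inter_subset_left, hCsub.trans inter_subset_right, key⟩

/-- Germ agreement propagates along a curve staying in both domains. -/
theorem Agree.along (huniq : P.Uniqueness) {γ : ℝ → X} (hγ : Continuous γ)
    {u v : ℝ} (huv : u ≤ v) {a b : P.Elt}
    (hsub : ∀ s ∈ Icc u v, γ s ∈ a.U ∩ b.U) (h : Agree (γ u) a b) : Agree (γ v) a b := by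
  refine h.upgrade huniq ?_
  show JoinedIn _ _ _
  refine ⟨⟨⟨fun t : unitInterval => γ (u + t * (v - u)), ?_⟩, ?_, ?_⟩, ?_⟩
  · exact hγ.comp (by continuity)
  · simp
  · simp
  · intro t
    refine hsub _ ⟨?_, ?_⟩
    · nlinarith [t.2.1, t.2.2, sub_nonneg.mpr huv]
    · nlinarith [t.2.1, t.2.2, sub_nonneg.mpr huv]

/-- A chain of local elements continued along a curve `γ` on `[u,v]`. -/
inductive Chain (P : Presheaf' X) (γ : ℝ → X) : ℕ → ℝ → ℝ → P.Elt → P.Elt → Prop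
  | single {u v : ℝ} {e : P.Elt} (huv : u ≤ v) (h : ∀ s ∈ Set.Icc u v, γ s ∈ e.U) :
      Chain P γ 0 u v e e
  | cons {n : ℕ} {u v w : ℝ} {a e₁ e₂ : P.Elt} (c : Chain P γ n u v a e₁)
      (hag : Agree (γ v) e₁ e₂) (hvw : v ≤ w) (h : ∀ s ∈ Set.Icc v w, γ s ∈ e₂.U) :
      Chain P γ (n + 1) u w a e₂

variable {γ : ℝ → X} {n m : ℕ} {u v : ℝ} {a b : P.Elt}

theorem Chain.le (c : Chain P γ n u v a b) : u ≤ v := by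
  induction c with
  | single huv _ => exact huv
  | cons c hag hvw h ih => exact ih.trans hvw

theorem Chain.mem_left (c : Chain P γ n u v a b) : γ u ∈ a.U := by
  induction c with
  | single huv h => exact h _ ⟨le_rfl, huv⟩
  | cons c hag hvw h ih => exact ih

theorem Chain.mem_right (c : Chain P γ n u v a b) : γ v ∈ b.U := by
  induction c with
  | single huv h => exact h _ ⟨huv, le_rfl⟩
  | cons c hag hvw h ih => exact h _ ⟨hvw, le_rfl⟩

theorem Chain.congr {γ' : ℝ → X} (c : Chain P γ n u v a b)
    (h : ∀ s ∈ Icc u v, γ' s = γ s) : Chain P γ' n u v a b := by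
  induction c with
  | single huv hs => exact .single huv (fun s hsm => (h s hsm) ▸ hs s hsm)
  | @cons n u v w a e₁ e₂ c hag hvw hs ih =>
      refine .cons (ih fun s hsm => h s ⟨hsm.1, hsm.2.trans hvw⟩) ?_ hvw
        (fun s hsm => (h s ⟨c.le.trans hsm.1, hsm.2⟩) ▸ hs s hsm)
      rwa [h v ⟨c.le, hvw⟩]

theorem Chain.reparam {σ : ℝ → ℝ} (hσc : Continuous σ) (hσm : Monotone σ)
    {u' v' : ℝ} (hu'v' : u' ≤ v')
    (c : Chain P γ n u v a b) (hu : σ u' = u) (hv : σ v' = v) :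
    Chain P (γ ∘ σ) n u' v' a b := by
  induction c generalizing u' v' with
  | @single u v e huv h =>
      refine .single hu'v' (fun s hs => h _ ?_)
      exact ⟨hu ▸ hσm hs.1, hv ▸ hσm hs.2⟩
  | @cons n u v w a e₁ e₂ c hag hvw hs ih =>
      have hmem : v ∈ Icc (σ u') (σ v') := ⟨hu ▸ c.le, hv ▸ hvw⟩
      obtain ⟨t₁, ht₁, hσt₁⟩ := intermediate_value_Icc hu'v' hσc.continuousOn hmem
      refine .cons (ih ht₁.1 hu hσt₁) ?_ ht₁.2 (fun s hsm => hs _ ?_)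
      · show Agree (γ (σ t₁)) e₁ e₂
        rwa [hσt₁]
      · exact ⟨hσt₁ ▸ hσm hsm.1, hv ▸ hσm hsm.2⟩

theorem Chain.one_piece (huniq : P.Uniqueness) (hγ : Continuous γ)
    (c : Chain P γ n u v a b) {e : P.Elt} (he : ∀ s ∈ Icc u v, γ s ∈ e.U)
    (h : Agree (γ u) a e) : Agree (γ v) b e := by
  induction c with
  | single huv hs =>
      exact Agree.along huniq hγ huv (fun s hsm => ⟨hs s hsm, he s hsm⟩) h
  | @cons n u v w a e₁ e₂ c hag hvw hs ih =>
      have h1 : Agree (γ v) e₁ e := ih (fun s hsm => he s ⟨hsm.1, hsm.2.trans hvw⟩) h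
      have h2 : Agree (γ v) e₂ e := hag.symm.trans h1
      exact Agree.along huniq hγ hvw
        (fun s hsm => ⟨hs s hsm, he s ⟨c.le.trans hsm.1, hsm.2⟩⟩) h2

theorem Chain.unique_aux (huniq : P.Uniqueness) (hγ : Continuous γ) (N : ℕ) :
    ∀ {n m : ℕ} {u v : ℝ} {a b a' b' : P.Elt}, n + m ≤ N →
      Chain P γ n u v a b → Chain P γ m u v a' b' → Agree (γ u) a a' →
      Agree (γ v) b b' := by
  induction N with
  | zero =>
      intro n m u v a b a' b' hN c₁ c₂ hst
      cases c₁ with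
      | single huv hs =>
          exact ((c₂.one_piece huniq hγ hs) hst.symm).symm
      | cons c hag hvw hs => omega
  | succ N ih =>
      intro n m u v a b a' b' hN c₁ c₂ hst
      cases c₁ with
      | single huv hs =>
          exact ((c₂.one_piece huniq hγ hs) hst.symm).symm
      | @cons n₁ _ v₁ _ _ e₁ _ c₁' hag₁ hv₁ hp₁ =>
          cases c₂ with
          | single huv hs =>
              exact c₁'.cons hag₁ hv₁ hp₁ |>.one_piece huniq hγ hs hst
          | @cons m₁ _ v₂ _ _ e₂ _ c₂' hag₂ hv₂ hp₂ =>
              rcases le_total v₁ v₂ with h | h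
              · have c₁'' : Chain P γ (n₁ + 1) u v₂ a b :=
                  c₁'.cons hag₁ h (fun s hsm => hp₁ s ⟨hsm.1, hsm.2.trans hv₂⟩)
                have key : Agree (γ v₂) b e₂ := ih (by omega) c₁'' c₂' hst
                have key2 : Agree (γ v₂) b b' := key.trans hag₂
                exact Agree.along huniq hγ hv₂
                  (fun s hsm => ⟨hp₁ s ⟨h.trans hsm.1, hsm.2⟩, hp₂ s hsm⟩) key2
              · have c₂'' : Chain P γ (m₁ + 1) u v₁ a' b' :=
                  c₂'.cons hag₂ h (fun s hsm => hp₂ s ⟨hsm.1, hsm.2.trans hv₁⟩)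
                have key : Agree (γ v₁) e₁ b' := ih (by omega) c₁' c₂'' hst
                have key2 : Agree (γ v₁) b b' := hag₁.symm.trans key
                exact Agree.along huniq hγ hv₁
                  (fun s hsm => ⟨hp₁ s hsm, hp₂ s ⟨h.trans hsm.1, hsm.2⟩⟩) key2

theorem Chain.unique (huniq : P.Uniqueness) (hγ : Continuous γ) {a' b' : P.Elt}
    (c₁ : Chain P γ n u v a b) (c₂ : Chain P γ m u v a' b')
    (hst : Agree (γ u) a a') : Agree (γ v) b b' :=
  Chain.unique_aux huniq hγ (n + m) le_rfl c₁ c₂ hst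

/-- The basic extension step: around every point there is an open, path-connected set `C`
such that any element defined near a point of `C` extends to `C` with the same germ. -/
theorem step (hext : P.Extension) (z : X) :
    ∃ C : Set X, IsOpen C ∧ z ∈ C ∧ ∀ (e₁ : P.Elt) (y : X), y ∈ e₁.U → y ∈ C →
      ∃ e₂ : P.Elt, e₂.U = C ∧ Agree y e₁ e₂ := by
  obtain ⟨W, hWo, hzW, hWe⟩ := hext z
  set C := pathComponentIn W z with hC
  have hCo : IsOpen C := hWo.pathComponentIn z
  have hCW : C ⊆ W := pathComponentIn_subset
  refine ⟨C, hCo, mem_pathComponentIn_self hzW, ?_⟩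
  intro e₁ y hy₁ hyC
  set B := pathComponentIn (e₁.U ∩ C) y with hB
  have hBo : IsOpen B := (e₁.hU.inter hCo).pathComponentIn y
  have hyB : y ∈ B := mem_pathComponentIn_self ⟨hy₁, hyC⟩
  have hBpre : IsPreconnected B :=
    (isPathConnected_pathComponentIn (Set.mem_inter hy₁ hyC)).isConnected.isPreconnected
  have hBsub : B ⊆ e₁.U ∩ C := pathComponentIn_subset
  have hBW : B ⊆ W := fun t ht => hCW (hBsub ht).2
  obtain ⟨h, hh⟩ := hWe B hBo hBpre ⟨y, hyB⟩ hBW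
      (P.res (hBsub.trans inter_subset_left : B ⊆ e₁.U) e₁.f)
  refine ⟨⟨C, hCo, P.res hCW h⟩, rfl, ?_⟩
  refine ⟨B, hBo, hyB, hBsub.trans inter_subset_left,
    hBsub.trans inter_subset_right, ?_⟩
  show _ = P.res (hBsub.trans inter_subset_right : B ⊆ C) (P.res hCW h)
  rw [P.res_comp]
  exact hh.symm

/-- Existence of chains along continuous curves. -/
theorem Chain.exists_chain (hext : P.Extension) (hγ : Continuous γ)
    (huv : u ≤ v) (e₀ : P.Elt) (h0 : γ u ∈ e₀.U) :
    ∃ (n : ℕ) (b : P.Elt), Chain P γ n u v e₀ b := by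
  set A := {w : ℝ | u ≤ w ∧ ∃ n b, Chain P γ n u w e₀ b} with hA
  have hAu : u ∈ A := by
    refine ⟨le_rfl, 0, e₀, .single le_rfl fun s hs => ?_⟩
    have : s = u := le_antisymm hs.2 hs.1
    rwa [this]
  have hne : (A ∩ Icc u v).Nonempty := ⟨u, hAu, le_rfl, huv⟩
  have hbdd : BddAbove (A ∩ Icc u v) := ⟨v, fun x hx => hx.2.2⟩
  set c := sSup (A ∩ Icc u v) with hc
  have hcIcc : c ∈ Icc u v :=
    ⟨le_csSup hbdd ⟨hAu, le_rfl, huv⟩, csSup_le hne fun x hx => hx.2.2⟩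
  obtain ⟨C, hCo, hcC, hCe⟩ := step hext (γ c)
  obtain ⟨ε, hε, hball⟩ := Metric.isOpen_iff.mp (hCo.preimage hγ) c hcC
  have hcA : c ∈ A := by
    rcases eq_or_lt_of_le hcIcc.1 with h | h
    · rwa [← h]
    obtain ⟨w, hw, hw'⟩ := exists_lt_of_lt_csSup hne (show c - min ε (c - u) < c by
      simp [hε, h, lt_min_iff])
    have hwc : w ≤ c := le_csSup hbdd hw
    obtain ⟨hwA, hwIcc⟩ := hw
    obtain ⟨n, b, cb⟩ := hwA.2
    have hwball : ∀ s ∈ Icc w c, γ s ∈ C := by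
      intro s hs
      apply hball
      rw [Metric.mem_ball, Real.dist_eq, abs_sub_lt_iff]
      constructor
      · nlinarith [hs.1, hs.2, hw', min_le_left ε (c - u), hε]
      · nlinarith [hs.1, hs.2, hw', min_le_left ε (c - u), hε]
    obtain ⟨e₂, he₂U, hag⟩ := hCe b (γ w) cb.mem_right (hwball w ⟨le_rfl, hwc⟩)
    exact ⟨hcIcc.1, n + 1, e₂, cb.cons hag hwc (fun s hs => he₂U ▸ hwball s hs)⟩
  rcases eq_or_lt_of_le hcIcc.2 with h | h
  · obtain ⟨-, n, b, cb⟩ := hcA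
    exact ⟨n, b, h ▸ cb⟩
  · exfalso
    set z := min (c + ε / 2) v with hz
    have hcz : c < z := by
      simp only [hz, lt_min_iff]
      exact ⟨by linarith, h⟩
    have hzA : z ∈ A ∩ Icc u v := by
      obtain ⟨hcu, n, b, cb⟩ := hcA
      have hmem : ∀ s ∈ Icc c z, γ s ∈ C := by
        intro s hs
        apply hball
        rw [Metric.mem_ball, Real.dist_eq, abs_sub_lt_iff]
        have : z ≤ c + ε / 2 := min_le_left _ _
        constructor <;> nlinarith [hs.1, hs.2]
      obtain ⟨e₂, he₂U, hag⟩ := hCe b (γ c) cb.mem_right hcC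
      exact ⟨⟨hcu.trans hcz.le, n + 1, e₂,
        cb.cons hag hcz.le (fun s hs => he₂U ▸ hmem s hs)⟩,
        hcu.trans hcz.le, min_le_right _ _⟩
    exact absurd (le_csSup hbdd hzA) (not_le.mpr hcz)

/-- A chain along a curve is also a chain along all nearby curves of a continuous family. -/
theorem Chain.stable {Y : Type*} [TopologicalSpace Y] {G : Y → ℝ → X}
    (hG : Continuous fun p : Y × ℝ => G p.1 p.2) {s₀ : Y}
    (c : Chain P (G s₀) n u v a b) : ∀ᶠ s in nhds s₀, Chain P (G s) n u v a b := by
  induction c with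
  | @single u v e huv h =>
      have hsub : {s₀} ×ˢ Icc u v ⊆ (fun p : Y × ℝ => G p.1 p.2) ⁻¹' e.U := by
        rintro ⟨s, t⟩ ⟨hs, ht⟩
        simp only [mem_singleton_iff] at hs
        subst hs
        exact h t ht
      obtain ⟨O, O', hOo, hO'o, hsO, hIO', hOO'⟩ := generalized_tube_lemma
        isCompact_singleton isCompact_Icc (e.hU.preimage hG) hsub
      refine Filter.eventually_of_mem (hOo.mem_nhds (hsO rfl)) (fun s hs => ?_)
      exact .single huv (fun t ht => hOO' (Set.mk_mem_prod hs (hIO' ht)))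
  | @cons n u v w a e₁ e₂ cc hag hvw h ih =>
      obtain ⟨W, hWo, hvW, h₁, h₂, he⟩ := hag
      have hcont : Continuous fun s : Y => G s v :=
        hG.comp (continuous_id.prodMk continuous_const)
      have hnode : ∀ᶠ s in nhds s₀, G s v ∈ W :=
        Filter.eventually_of_mem ((hWo.preimage hcont).mem_nhds hvW) (fun s hs => hs)
      have hsub : {s₀} ×ˢ Icc v w ⊆ (fun p : Y × ℝ => G p.1 p.2) ⁻¹' e₂.U := by
        rintro ⟨s, t⟩ ⟨hs, ht⟩
        simp only [mem_singleton_iff] at hs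
        subst hs
        exact h t ht
      obtain ⟨O, O', hOo, hO'o, hsO, hIO', hOO'⟩ := generalized_tube_lemma
        isCompact_singleton isCompact_Icc (e₂.hU.preimage hG) hsub
      have hpiece : ∀ᶠ s in nhds s₀, ∀ t ∈ Icc v w, G s t ∈ e₂.U :=
        Filter.eventually_of_mem (hOo.mem_nhds (hsO rfl))
          (fun s hs t ht => hOO' (Set.mk_mem_prod hs (hIO' ht)))
      filter_upwards [ih, hnode, hpiece] with s h1 h2 h3
      exact h1.cons ⟨W, hWo, h2, h₁, h₂, he⟩ hvw h3

/-- Monodromy: continuations along homotopic paths from agreeing germs end with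
agreeing germs. -/
theorem Chain.monodromy (huniq : P.Uniqueness) (hext : P.Extension) {x y : X}
    {p q : Path x y} (hpq : p.Homotopic q) {a₀ b₀ a₁ b₁ : P.Elt}
    (cp : Chain P p.extend n 0 1 a₀ b₀) (cq : Chain P q.extend m 0 1 a₁ b₁)
    (hst : Agree x a₀ a₁) : Agree y b₀ b₁ := by
  obtain ⟨H⟩ := hpq
  set G : ℝ → ℝ → X := fun s t =>
    H (Set.projIcc 0 1 zero_le_one s, Set.projIcc 0 1 zero_le_one t) with hG
  have hGc : Continuous fun pr : ℝ × ℝ => G pr.1 pr.2 :=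
    H.continuous.comp ((continuous_projIcc.comp continuous_fst).prodMk
      (continuous_projIcc.comp continuous_snd))
  have hGs : ∀ s, Continuous fun t => G s t :=
    fun s => hGc.comp (continuous_const.prodMk continuous_id)
  have hprojIcc0 : Set.projIcc (0:ℝ) 1 zero_le_one 0 = 0 := by
    simp [Set.projIcc_left]
  have hprojIcc1 : Set.projIcc (0:ℝ) 1 zero_le_one 1 = 1 := by
    simp [Set.projIcc_right]
  have hGx : ∀ s, G s 0 = x := by
    intro s
    simp only [hG, hprojIcc0]
    exact Path.Homotopy.source H _
  have hGy : ∀ s, G s 1 = y := by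
    intro s
    simp only [hG, hprojIcc1]
    exact Path.Homotopy.target H _
  have hG0 : ∀ t, G 0 t = p.extend t := by
    intro t
    simp only [hG, hprojIcc0]
    show H (0, _) = _
    rw [ContinuousMap.HomotopyWith.apply_zero]
    rfl
  have hG1 : ∀ t, G 1 t = q.extend t := by
    intro t
    simp only [hG, hprojIcc1]
    show H (1, _) = _
    rw [ContinuousMap.HomotopyWith.apply_one]
    rfl
  have hxa₀ : x ∈ a₀.U := by
    have := cp.mem_left
    rwa [Path.extend_zero] at this
  set S : Set ℝ := {s | ∀ (k : ℕ) (e f : P.Elt), Chain P (fun t => G s t) k 0 1 e f →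
    Agree x e a₀ → Agree y f b₀} with hS
  have main : ∀ s₀ : ℝ, ∀ᶠ s in nhds s₀, (s ∈ S ↔ s₀ ∈ S) := by
    intro s₀
    obtain ⟨k₀, bb, cch⟩ := Chain.exists_chain hext (hGs s₀) zero_le_one a₀
      (by show G s₀ 0 ∈ a₀.U; rw [hGx]; exact hxa₀)
    have hstab := cch.stable hGc
    filter_upwards [hstab] with s hs
    constructor
    · intro hsS
      have h1 : Agree y bb b₀ := by
        refine hsS k₀ a₀ bb hs ?_
        show Agree x a₀ a₀
        exact Agree.refl hxa₀
      intro k e f c' hAg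
      have hAg' : Agree ((fun t => G s₀ t) 0) e a₀ := by
        show Agree (G s₀ 0) e a₀; rwa [hGx]
      have h2 : Agree ((fun t => G s₀ t) 1) f bb :=
        c'.unique huniq (hGs s₀) cch hAg'
      have h2' : Agree y f bb := by rwa [show (fun t : ℝ => G s₀ t) 1 = y from hGy s₀] at h2
      exact h2'.trans h1
    · intro hs₀S
      have h1 : Agree y bb b₀ := hs₀S k₀ a₀ bb cch (Agree.refl hxa₀)
      intro k e f c' hAg
      have hAg' : Agree ((fun t => G s t) 0) e a₀ := by
        show Agree (G s 0) e a₀; rwa [hGx]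
      have h2 : Agree ((fun t => G s t) 1) f bb :=
        c'.unique huniq (hGs s) hs hAg'
      have h2' : Agree y f bb := by rwa [show (fun t : ℝ => G s t) 1 = y from hGy s] at h2
      exact h2'.trans h1
  have hSopen : IsOpen S := by
    rw [isOpen_iff_eventually]
    intro s hsS
    filter_upwards [main s] with s' hs'
    exact hs'.mpr hsS
  have hScopen : IsOpen Sᶜ := by
    rw [isOpen_iff_eventually]
    intro s hsS
    filter_upwards [main s] with s' hs'
    exact fun h => hsS (hs'.mp h)
  have h0S : (0 : ℝ) ∈ S := by
    intro k e f c' hAg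
    have c'' : Chain P p.extend k 0 1 e f :=
      c'.congr (fun t ht => (hG0 t).symm)
    have hAg' : Agree (p.extend 0) e a₀ := by rwa [Path.extend_zero]
    have := c''.unique huniq p.continuous_extend cp hAg'
    rwa [Path.extend_one] at this
  have hSuniv : S = univ := by
    have : IsClopen S := ⟨by rw [← isOpen_compl_iff]; exact hScopen, hSopen⟩
    exact this.eq_univ ⟨0, h0S⟩
  have h1S : (1 : ℝ) ∈ S := hSuniv ▸ mem_univ _
  have cq' : Chain P (fun t => G 1 t) m 0 1 a₁ b₁ :=
    cq.congr (fun t ht => hG1 t)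
  exact (h1S m a₁ b₁ cq' hst.symm).symm

theorem trans_extend_left {x y z : X} (p : Path x y) (q : Path y z) {s : ℝ}
    (h0 : 0 ≤ s) (h : s ≤ 1 / 2) : (p.trans q).extend s = p.extend (2 * s) := by
  have hs1 : s ∈ Icc (0:ℝ) 1 := ⟨h0, h.trans (by norm_num)⟩
  have h2s : (2 * s) ∈ Icc (0:ℝ) 1 := ⟨by linarith, by linarith⟩
  rw [Path.extend_apply _ hs1, Path.extend_apply _ h2s, Path.trans_apply]
  rw [dif_pos (show ((⟨s, hs1⟩ : unitInterval) : ℝ) ≤ 1/2 from h)]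

theorem trans_extend_right {x y z : X} (p : Path x y) (q : Path y z) {s : ℝ}
    (h0 : 1 / 2 ≤ s) (h : s ≤ 1) : (p.trans q).extend s = q.extend (2 * s - 1) := by
  have hs1 : s ∈ Icc (0:ℝ) 1 := ⟨by linarith, h⟩
  have h2s : (2 * s - 1) ∈ Icc (0:ℝ) 1 := ⟨by linarith, by linarith⟩
  rw [Path.extend_apply _ hs1, Path.extend_apply _ h2s, Path.trans_apply]
  rcases lt_or_eq_of_le h0 with h' | h'
  · rw [dif_neg (show ¬ ((⟨s, hs1⟩ : unitInterval) : ℝ) ≤ 1/2 from not_le.mpr h')]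
  · rw [dif_pos (show ((⟨s, hs1⟩ : unitInterval) : ℝ) ≤ 1/2 from le_of_eq h'.symm)]
    have e1 : (2 * s) = 1 := by rw [← h']; ring
    have e2 : (2 * s - 1) = 0 := by rw [← h']; ring
    have h1 : p ⟨2 * s, by rw [e1]; norm_num⟩ = y := by
      have : (⟨2 * s, by rw [e1]; norm_num⟩ : unitInterval) = 1 := by
        ext; exact_mod_cast e1
      rw [this, p.target]
    have h2 : q ⟨2 * s - 1, by rw [e2]; norm_num⟩ = y := by
      have : (⟨2 * s - 1, by rw [e2]; norm_num⟩ : unitInterval) = 0 := by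
        ext; exact_mod_cast e2
      rw [this, q.source]
    rw [h1, h2]

/-- Transported injectivity half of the localization property. -/
theorem loc_inj (hloc : P.Localization) {𝒰 : Set (Set X)} (hop : ∀ U ∈ 𝒰, IsOpen U)
    {W : Set X} (hW : ⋃₀ 𝒰 = W) {f g : P.obj W}
    (h : ∀ U (hU : U ∈ 𝒰) (hsub : U ⊆ W), P.res hsub f = P.res hsub g) : f = g := by
  subst hW
  exact (hloc 𝒰 hop).1 f g (fun U hU => h U hU _)

/-- Transported gluing half of the localization property. -/
theorem loc_glue (hloc : P.Localization) {𝒰 : Set (Set X)} (hop : ∀ U ∈ 𝒰, IsOpen U)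
    {W : Set X} (hW : ⋃₀ 𝒰 = W) (sel : ∀ U ∈ 𝒰, P.obj U)
    (hcompat : ∀ U (hU : U ∈ 𝒰) (V : Set X) (hV : V ∈ 𝒰),
      P.res (Set.inter_subset_left : U ∩ V ⊆ U) (sel U hU)
        = P.res (Set.inter_subset_right : U ∩ V ⊆ V) (sel V hV)) :
    ∃ f : P.obj W, ∀ U (hU : U ∈ 𝒰) (hsub : U ⊆ W), P.res hsub f = sel U hU := by
  subst hW
  obtain ⟨f, hf⟩ := (hloc 𝒰 hop).2 sel hcompat
  exact ⟨f, fun U hU hsub => hf U hU⟩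

/-- Two elements whose germs agree at every point of the intersection of their domains
restrict equally to the intersection. -/
theorem agree_glue (hloc : P.Localization) (huniq : P.Uniqueness)
    {A B : Set X} (hA : IsOpen A) (hB : IsOpen B) (fA : P.obj A) (fB : P.obj B)
    (h : ∀ z ∈ A ∩ B, Agree z ⟨A, hA, fA⟩ ⟨B, hB, fB⟩) :
    P.res (Set.inter_subset_left : A ∩ B ⊆ A) fA
      = P.res (Set.inter_subset_right : A ∩ B ⊆ B) fB := by
  set 𝒰 : Set (Set X) := {C | ∃ z ∈ A ∩ B, C = pathComponentIn (A ∩ B) z} with h𝒰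
  have hop : ∀ U ∈ 𝒰, IsOpen U := by
    rintro U ⟨z, hz, rfl⟩
    exact (hA.inter hB).pathComponentIn z
  have hW : ⋃₀ 𝒰 = A ∩ B := by
    apply subset_antisymm
    · rintro t ⟨C, ⟨z, hz, rfl⟩, htC⟩
      exact pathComponentIn_subset htC
    · intro z hz
      exact ⟨pathComponentIn (A ∩ B) z, ⟨z, hz, rfl⟩, mem_pathComponentIn_self hz⟩
  apply loc_inj hloc hop hW
  rintro U ⟨z, hz, rfl⟩ hsub
  set C := pathComponentIn (A ∩ B) z with hC
  obtain ⟨W, hWo, hzW, h₁, h₂, he⟩ := h z hz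
  have hCo : IsOpen C := (hA.inter hB).pathComponentIn z
  have hCpre : IsPreconnected C :=
    (isPathConnected_pathComponentIn (F := A ∩ B) hz).isConnected.isPreconnected
  have hWCo : IsOpen (W ∩ C) := hWo.inter hCo
  have hWCne : (W ∩ C).Nonempty := ⟨z, hzW, mem_pathComponentIn_self hz⟩
  have hinj := huniq C (W ∩ C) hCo hCpre hWCo hWCne inter_subset_right
  apply hinj
  have e1 : P.res (inter_subset_right : W ∩ C ⊆ C)
        (P.res hsub (P.res (inter_subset_left : A ∩ B ⊆ A) fA))
      = P.res (inter_subset_left : W ∩ C ⊆ W) (P.res h₁ fA) := by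
    rw [P.res_comp, P.res_comp, P.res_comp]
  have e2 : P.res (inter_subset_left : W ∩ C ⊆ W) (P.res h₂ fB)
      = P.res (inter_subset_right : W ∩ C ⊆ C)
        (P.res hsub (P.res (inter_subset_right : A ∩ B ⊆ B) fB)) := by
    rw [P.res_comp, P.res_comp, P.res_comp]
  rw [e1, he, e2]

end Presheaf'
end Aux

theorem globalization_principle
    {X : Type*} [TopologicalSpace X] [T2Space X] [LocallyPathConnectedSpace X]
    [ConnectedSpace X] [SimplyConnectedSpace X]
    (P : Presheaf' X)
    (hloc : P.Localization) (huniq : P.Uniqueness) (hext : P.Extension) :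
    (∀ V : Set X, IsOpen V → IsPreconnected V → V.Nonempty →
      Function.Surjective (P.res (Set.subset_univ V) : P.obj Set.univ → P.obj V)) ∧
    ((∃ U : Set X, IsOpen U ∧ U.Nonempty ∧ Nonempty (P.obj U)) →
      Nonempty (P.obj Set.univ)) := by
  classical
  have main : ∀ V : Set X, IsOpen V → IsPreconnected V → V.Nonempty →
      Function.Surjective (P.res (Set.subset_univ V) : P.obj Set.univ → P.obj V) := by
    intro V hVo hVc hVne g
    obtain ⟨v₀, hv₀⟩ := hVne
    set e_g : P.Elt := ⟨V, hVo, g⟩ with he_g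
    have hex : ∀ x : X, ∃ (n : ℕ) (b : P.Elt),
        P.Chain (PathConnectedSpace.somePath v₀ x).extend n 0 1 e_g b := by
      intro x
      apply Presheaf'.Chain.exists_chain hext (Path.continuous_extend _) zero_le_one
      rw [Path.extend_zero]; exact hv₀
    choose nE E cE using hex
    have hxE : ∀ x, x ∈ (E x).U := by
      intro x
      have := (cE x).mem_right
      rwa [Path.extend_one] at this
    have indep : ∀ (z : X) (p : Path v₀ z) (k : ℕ) (b : P.Elt),
        P.Chain p.extend k 0 1 e_g b → Presheaf'.Agree z b (E z) := by
      intro z p k b c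
      exact Presheaf'.Chain.monodromy huniq hext
        (SimplyConnectedSpace.paths_homotopic p (PathConnectedSpace.somePath v₀ z))
        c (cE z) (Presheaf'.Agree.refl hv₀)
    have coh : ∀ x z : X, z ∈ pathComponentIn ((E x).U) x →
        Presheaf'.Agree z (E x) (E z) := by
      intro x z hz
      have hJ : JoinedIn ((E x).U) x z := hz
      set p := PathConnectedSpace.somePath v₀ x with hp
      set q := hJ.somePath with hq
      have c₁ : P.Chain (p.extend ∘ fun t : ℝ => 2 * t) (nE x) 0 (1/2) e_g (E x) :=
        (cE x).reparam (by continuity) (fun a b hab => mul_le_mul_of_nonneg_left hab (by norm_num))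
          (by norm_num) (by norm_num) (by norm_num)
      have c₂ : P.Chain (p.trans q).extend (nE x) 0 (1/2) e_g (E x) :=
        c₁.congr (fun s hs => Presheaf'.trans_extend_left p q hs.1 hs.2)
      have hval : (p.trans q).extend (1/2 : ℝ) = x := by
        rw [Presheaf'.trans_extend_left p q (by norm_num) le_rfl]
        norm_num
      have hnode : Presheaf'.Agree ((p.trans q).extend (1/2 : ℝ)) (E x) (E x) := by
        rw [hval]; exact Presheaf'.Agree.refl (hxE x)
      have hpiece : ∀ s ∈ Set.Icc (1/2 : ℝ) 1, (p.trans q).extend s ∈ (E x).U := by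
        intro s hs
        rw [Presheaf'.trans_extend_right p q hs.1 hs.2]
        have h2s : (2 * s - 1) ∈ Set.Icc (0:ℝ) 1 := ⟨by linarith [hs.1], by linarith [hs.2]⟩
        rw [Path.extend_apply _ h2s]
        exact hJ.somePath_mem _
      have c₃ : P.Chain (p.trans q).extend (nE x + 1) 0 1 e_g (E x) :=
        c₂.cons hnode (by norm_num) hpiece
      exact indep z (p.trans q) _ (E x) c₃
    set 𝒰 : Set (Set X) := Set.range (fun x : X => pathComponentIn ((E x).U) x) with h𝒰
    have hop : ∀ U ∈ 𝒰, IsOpen U := by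
      rintro U ⟨x, rfl⟩
      exact (E x).hU.pathComponentIn x
    have hWuniv : ⋃₀ 𝒰 = Set.univ := by
      apply Set.eq_univ_of_forall
      intro t
      exact ⟨pathComponentIn ((E t).U) t, ⟨t, rfl⟩, mem_pathComponentIn_self (hxE t)⟩
    have hsel_sub : ∀ (U) (hU : U ∈ 𝒰), U ⊆ (E hU.choose).U := by
      intro U hU
      conv_lhs => rw [← hU.choose_spec]
      exact pathComponentIn_subset
    set sel : ∀ U ∈ 𝒰, P.obj U := fun U hU => P.res (hsel_sub U hU) (E hU.choose).f
      with hsel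
    have key : ∀ (U) (hU : U ∈ 𝒰) (z : X) (hz : z ∈ U),
        Presheaf'.Agree z ⟨U, hop U hU, sel U hU⟩ (E z) := by
      intro U hU z hz
      have spec : pathComponentIn ((E hU.choose).U) hU.choose = U := hU.choose_spec
      have hzc : z ∈ pathComponentIn ((E hU.choose).U) hU.choose := by
        rw [spec]; exact hz
      obtain ⟨W, hWo, hzW, h₁, h₂, he⟩ := coh hU.choose z hzc
      refine ⟨W ∩ U, hWo.inter (hop U hU), ⟨hzW, hz⟩, Set.inter_subset_right,
        (Set.inter_subset_left : W ∩ U ⊆ W).trans h₂, ?_⟩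
      show P.res _ (P.res (hsel_sub U hU) (E hU.choose).f) = _
      rw [P.res_comp]
      have := congrArg (P.res (Set.inter_subset_left : W ∩ U ⊆ W)) he
      rw [P.res_comp, P.res_comp] at this
      exact this
    have compat : ∀ U (hU : U ∈ 𝒰) (V' : Set X) (hV' : V' ∈ 𝒰),
        P.res (Set.inter_subset_left : U ∩ V' ⊆ U) (sel U hU)
          = P.res (Set.inter_subset_right : U ∩ V' ⊆ V') (sel V' hV') := by
      intro U hU V' hV'
      exact Presheaf'.agree_glue hloc huniq (hop U hU) (hop V' hV') (sel U hU) (sel V' hV')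
        (fun z hz => (key U hU z hz.1).trans (key V' hV' z hz.2).symm)
    obtain ⟨F, hF⟩ := Presheaf'.loc_glue hloc hop hWuniv sel compat
    refine ⟨F, ?_⟩
    have hU₀ : pathComponentIn ((E v₀).U) v₀ ∈ 𝒰 := ⟨v₀, rfl⟩
    set U₀ := pathComponentIn ((E v₀).U) v₀ with hU₀def
    have hagg : Presheaf'.Agree v₀ (⟨U₀, hop U₀ hU₀, sel U₀ hU₀⟩ : P.Elt) e_g := by
      have h1 := key U₀ hU₀ v₀ (mem_pathComponentIn_self (hxE v₀))
      have c : P.Chain (Path.refl v₀).extend 0 0 1 e_g e_g :=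
        .single zero_le_one (fun s hs => by rw [Path.refl_extend]; exact hv₀)
      have h2 : Presheaf'.Agree v₀ e_g (E v₀) := indep v₀ (Path.refl v₀) 0 e_g c
      exact h1.trans h2.symm
    obtain ⟨W, hWo, hv₀W, hWU₀, hWV, he⟩ := hagg
    apply huniq V W hVo hVc hWo ⟨v₀, hv₀W⟩ hWV
    have hFU₀ := hF U₀ hU₀ (Set.subset_univ U₀)
    have e1 : P.res hWV (P.res (Set.subset_univ V) F)
        = P.res hWU₀ (P.res (Set.subset_univ U₀) F) := by
      rw [P.res_comp, P.res_comp]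
    rw [e1, hFU₀]
    exact he
  refine ⟨main, ?_⟩
  rintro ⟨U, hUo, ⟨x, hx⟩, ⟨f⟩⟩
  have hVo := hUo.pathComponentIn x
  have hVc := (isPathConnected_pathComponentIn (F := U) hx).isConnected.isPreconnected
  obtain ⟨F, -⟩ := main _ hVo hVc ⟨x, mem_pathComponentIn_self hx⟩
    (P.res pathComponentIn_subset f)
  exact ⟨F⟩
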